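/- Fix h ≥ 0 and suppose 𝒫(|t₁| > h) > 0. Assume the weak laws of large numbers: N⁻¹·Σ_{i=1}^N 1{|t_i| > h} converges in probability to 𝒫(|t₁| > h), and N⁻¹·Σ_{i=1}^N 1{F_i ∩ {|t_i| > h}} converges in probability to 𝒫(F₁ ∩ {|t₁| > h}). Then the Benjamini–Hochberg false discovery proportion R_N := [Σ_{i=1}^N 1{F_i ∩ {|t_i| > h}}] / [Σ_{i=1}^N 1{|t_i| > h}] (set to 0 when the denominator is 0) converges in probability to the Bayesian false discovery rate 𝒫(F₁ | |t₁| > h) := 𝒫(F₁ ∩ {|t₁| > h})/𝒫(|t₁| > h). (Equivalence of the Benjamini–Hochberg FDR and the Bayesian FDR under weak dependence.) -/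

import Mathlib

open MeasureTheory ProbabilityTheory Filter
open scoped Classical

/-- Equivalence of the Benjamini–Hochberg false discovery proportion and the
Bayesian FDR under weak dependence: given the weak laws of large numbers, the
BH false discovery proportion converges in probability to the Bayesian FDR. -/
theorem bh_fdp_tendsto_bayes_fdr
    {Ω : Type*} [MeasurableSpace Ω] (P : Measure Ω) [IsProbabilityMeasure P]
    (F : ℕ → Set Ω) (hFmeas : ∀ i, MeasurableSet (F i))
    (t : ℕ → Ω → ℝ) (ht : ∀ i, Measurable (t i))
    (hident : ∀ i, IdentDistrib
      (fun ω => ((F i).indicator (fun _ => (1 : ℝ)) ω, t i ω))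
      (fun ω => ((F 0).indicator (fun _ => (1 : ℝ)) ω, t 0 ω)) P P)
    (h : ℝ) (hh : 0 ≤ h)
    (hpos : 0 < P {ω | h < |t 0 ω|})
    (hwlln1 : TendstoInMeasure P
      (fun N ω => (∑ i ∈ Finset.range N, if h < |t i ω| then (1 : ℝ) else 0) / N)
      atTop (fun _ => (P {ω | h < |t 0 ω|}).toReal))
    (hwlln2 : TendstoInMeasure P
      (fun N ω =>
        (∑ i ∈ Finset.range N, if ω ∈ F i ∧ h < |t i ω| then (1 : ℝ) else 0) / N)
      atTop (fun _ => (P (F 0 ∩ {ω | h < |t 0 ω|})).toReal)) :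
    TendstoInMeasure P
      (fun N ω =>
        if (∑ i ∈ Finset.range N, if h < |t i ω| then (1 : ℝ) else 0) = 0 then 0
        else (∑ i ∈ Finset.range N, if ω ∈ F i ∧ h < |t i ω| then (1 : ℝ) else 0) /
          (∑ i ∈ Finset.range N, if h < |t i ω| then (1 : ℝ) else 0))
      atTop
      (fun _ => (P (F 0 ∩ {ω | h < |t 0 ω|})).toReal /
        (P {ω | h < |t 0 ω|}).toReal) := by
  set a := (P {ω | h < |t 0 ω|}).toReal with ha_def
  set b := (P (F 0 ∩ {ω | h < |t 0 ω|})).toReal with hb_def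
  have ha : 0 < a := ENNReal.toReal_pos hpos.ne' (measure_ne_top P _)
  have hb : 0 ≤ b := ENNReal.toReal_nonneg
  rw [tendstoInMeasure_iff_dist] at hwlln1 hwlln2 ⊢
  intro ε hε
  set δ := min (a / 2) (ε * a ^ 2 / (4 * (a + b))) with hδ_def
  have hδ : 0 < δ := lt_min (by positivity) (by positivity)
  have hδ1 : δ ≤ a / 2 := min_le_left _ _
  have hδ2 : δ ≤ ε * a ^ 2 / (4 * (a + b)) := min_le_right _ _
  have hδ3 : δ * (4 * (a + b)) ≤ ε * a ^ 2 := by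
    rw [← le_div_iff₀ (by positivity)]; exact hδ2
  have key : ∀ n : ℕ, 1 ≤ n →
      {ω | ε ≤ dist
        (if (∑ i ∈ Finset.range n, if h < |t i ω| then (1 : ℝ) else 0) = 0 then 0
        else (∑ i ∈ Finset.range n, if ω ∈ F i ∧ h < |t i ω| then (1 : ℝ) else 0) /
          (∑ i ∈ Finset.range n, if h < |t i ω| then (1 : ℝ) else 0)) (b / a)} ⊆
      {ω | δ ≤ dist ((∑ i ∈ Finset.range n, if h < |t i ω| then (1 : ℝ) else 0) / n) a} ∪
      {ω | δ ≤ dist ((∑ i ∈ Finset.range n, if ω ∈ F i ∧ h < |t i ω| then (1 : ℝ) else 0) / n) b} := by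
    intro n hn ω hω
    by_contra hcon
    simp only [Set.mem_union, Set.mem_setOf_eq, not_or, not_le] at hcon
    obtain ⟨h1, h2⟩ := hcon
    simp only [Set.mem_setOf_eq] at hω
    set s := (∑ i ∈ Finset.range n, if h < |t i ω| then (1 : ℝ) else 0) with hs_def
    set u := (∑ i ∈ Finset.range n, if ω ∈ F i ∧ h < |t i ω| then (1 : ℝ) else 0) with hu_def
    set x := s / (n : ℝ) with hx_def
    set y := u / (n : ℝ) with hy_def
    rw [Real.dist_eq] at h1 h2
    have hxb := abs_lt.mp h1
    have hyb := abs_lt.mp h2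
    have hxpos : a / 2 < x := by linarith [hxb.1, hxb.2]
    have hnpos : (0 : ℝ) < n := by exact_mod_cast hn
    have hs0 : s ≠ 0 := by
      intro hs
      rw [hx_def, hs] at hxpos
      simp at hxpos
      linarith
    rw [if_neg hs0] at hω
    have hus : u / s = y / x := by
      field_simp
      rw [hx_def, hy_def]
      field_simp
    rw [hus, Real.dist_eq] at hω
    have hx0 : (0 : ℝ) < x := by linarith
    have hfrac : y / x - b / a = (y * a - x * b) / (x * a) :=
      div_sub_div y b hx0.ne' ha.ne'
    rw [hfrac, abs_div, abs_of_pos (by positivity : (0:ℝ) < x * a)] at hω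
    have hnum : |y * a - x * b| < ε * (x * a) := by
      rw [abs_lt]
      constructor <;> nlinarith [hxb.1, hxb.2, hyb.1, hyb.2, mul_pos hε ha,
        mul_pos (mul_pos hε ha) ha, hb, hδ3, hδ.le]
    have : |y * a - x * b| / (x * a) < ε :=
      (div_lt_iff₀ (by positivity)).mpr hnum
    linarith
  have hA := hwlln1 δ hδ
  have hB := hwlln2 δ hδ
  have hsum : Tendsto (fun n =>
      P {ω | δ ≤ dist ((∑ i ∈ Finset.range n, if h < |t i ω| then (1 : ℝ) else 0) / n) a} +
      P {ω | δ ≤ dist ((∑ i ∈ Finset.range n, if ω ∈ F i ∧ h < |t i ω| then (1 : ℝ) else 0) / n) b})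
      atTop (nhds 0) := by
    simpa only [add_zero] using hA.add hB
  refine tendsto_of_tendsto_of_tendsto_of_le_of_le' tendsto_const_nhds hsum
    (Eventually.of_forall fun n => zero_le) ?_
  filter_upwards [eventually_ge_atTop 1] with n hn
  calc P _ ≤ P (_ ∪ _) := measure_mono (key n hn)
    _ ≤ _ := measure_union_le _ _
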